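/- There is a universal constant C > 0 such that for all integers n1 ≥ n2 ≥ 2, every integer k ≥ 1 and every (i, j) ∈ [n1−1] × [n2−1], one has Σ_{(l,r)} [ sin²(π i l / n1) sin²(π j r / n2) ] / [ 4 n1 n2 sin²(π l / (2 n1)) sin²(π r / (2 n2)) ] ≤ C (n1 n2 / k) log(n2 + 1), where the sum is over all pairs (l, r) ∈ [n1−1] × [n2−1] with l r > k. -/

import Mathlib

open Finset Real

lemma sum_inv_sq_le (m N : ℕ) (hm : 1 ≤ m) :
    ∑ r ∈ Icc m N, ((r:ℝ)^2)⁻¹ ≤ 2/m := by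
  have key : ∀ N, ∑ r ∈ Icc m N, ((r:ℝ)^2)⁻¹ ≤ 2/m - 2/(max m (N+1)) := by
    intro N
    induction N with
    | zero =>
      rw [Icc_eq_empty (by omega), sum_empty]
      have : max m 1 = m := by omega
      rw [this]; simp
    | succ n ih =>
      rcases le_or_gt m (n+1) with h | h
      · rw [max_eq_right h] at ih
        rw [Finset.sum_Icc_succ_top h, max_eq_right (by omega)]
        have hstep : ((((n+1:ℕ)):ℝ)^2)⁻¹ ≤ 2/((n+1:ℕ):ℝ) - 2/((n+1+1:ℕ):ℝ) := by
          push_cast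
          rw [inv_eq_one_div, div_sub_div _ _ (by positivity) (by positivity),
            div_le_div_iff₀ (by positivity) (by positivity)]
          nlinarith [sq_nonneg ((n:ℝ))]
        linarith
      · rw [Icc_eq_empty (by omega), sum_empty, max_eq_left (by omega)]
        simp
  calc ∑ r ∈ Icc m N, ((r:ℝ)^2)⁻¹ ≤ 2/m - 2/(max m (N+1)) := key N
    _ ≤ 2/m := by
        have h2 : (0:ℝ) ≤ 2/(max m (N+1) : ℕ) := by positivity
        linarith

lemma sum_inv_le (m M : ℕ) (hm : 1 ≤ m) (hM : m ≤ M) :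
    ∑ l ∈ Icc m M, ((l:ℝ))⁻¹ ≤ 1/m + Real.log M - Real.log m := by
  induction M, hM using Nat.le_induction with
  | base => rw [Icc_self, sum_singleton, inv_eq_one_div]; simp
  | succ M hM ih =>
    rw [Finset.sum_Icc_succ_top (by omega)]
    have hM1 : (1:ℝ) ≤ (M:ℝ) := by exact_mod_cast hm.trans hM
    have hstep : ((M+1:ℕ):ℝ)⁻¹ ≤ Real.log (M+1:ℕ) - Real.log M := by
      have h1 : (0:ℝ) < (M:ℝ) := by linarith
      have h2 : (0:ℝ) < (M:ℝ)+1 := by linarith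
      have := Real.log_le_sub_one_of_pos (x := (M:ℝ)/((M:ℝ)+1)) (by positivity)
      rw [Real.log_div h1.ne' h2.ne'] at this
      push_cast
      have : Real.log (M:ℝ) - Real.log ((M:ℝ)+1) ≤ -( ((M:ℝ)+1)⁻¹) := by
        rw [div_sub_one h2.ne'] at this
        calc Real.log (M:ℝ) - Real.log ((M:ℝ)+1) ≤ ((M:ℝ) - ((M:ℝ)+1))/((M:ℝ)+1) := this
          _ = -(((M:ℝ)+1)⁻¹) := by field_simp; ring
      linarith
    push_cast at *
    linarith


lemma inner_bound (n₂ k l : ℕ) (hl : 1 ≤ l) (hk : 1 ≤ k) :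
    ∑ r ∈ Icc 1 (n₂-1), (if k < l*r then ((l:ℝ)^2)⁻¹ * ((r:ℝ)^2)⁻¹ else 0)
      ≤ if k < l*(n₂-1) then (if l ≤ k then 2/((l:ℝ)*k) else 2/(l:ℝ)^2) else 0 := by
  by_cases hcond : k < l*(n₂-1)
  · rw [if_pos hcond]
    set m := k/l + 1 with hm
    have hm1 : 1 ≤ m := Nat.le_add_left 1 (k/l)
    have hsub : Icc m (n₂-1) ⊆ Icc 1 (n₂-1) := Icc_subset_Icc hm1 le_rfl
    have e1 : ∑ r ∈ Icc 1 (n₂-1), (if k < l*r then ((l:ℝ)^2)⁻¹ * ((r:ℝ)^2)⁻¹ else 0)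
        = ∑ r ∈ Icc m (n₂-1), (if k < l*r then ((l:ℝ)^2)⁻¹ * ((r:ℝ)^2)⁻¹ else 0) := by
      refine (Finset.sum_subset hsub fun x hx hnx => ?_).symm
      rw [if_neg]
      rw [mem_Icc] at hx hnx
      have hx2 : x ≤ k/l := by omega
      have h2 : l * x ≤ l * (k/l) := Nat.mul_le_mul_left l hx2
      have h3 : l * (k/l) ≤ k := by rw [Nat.mul_comm]; exact Nat.div_mul_le_self k l
      omega
    have e2 : ∑ r ∈ Icc m (n₂-1), (if k < l*r then ((l:ℝ)^2)⁻¹ * ((r:ℝ)^2)⁻¹ else 0)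
        = ((l:ℝ)^2)⁻¹ * ∑ r ∈ Icc m (n₂-1), ((r:ℝ)^2)⁻¹ := by
      rw [mul_sum]
      refine Finset.sum_congr rfl fun r hr => ?_
      rw [mem_Icc] at hr
      have h1 : k / l < r := by omega
      have h2 : k < r * l := (Nat.div_lt_iff_lt_mul (by omega : 0 < l)).mp h1
      rw [if_pos (by rwa [Nat.mul_comm l r])]
    have hklm : (k:ℝ) ≤ (l:ℝ) * (m:ℝ) := by
      have : k < l * m := by
        have h1 := Nat.div_add_mod k l
        have h2 : k % l < l := Nat.mod_lt _ hl
        calc k = l * (k/l) + k % l := h1.symm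
          _ < l * (k/l) + l := by omega
          _ = l * m := by rw [hm]; ring
      exact_mod_cast this.le
    have hsum := sum_inv_sq_le m (n₂-1) hm1
    have hl0 : (0:ℝ) < l := by exact_mod_cast hl
    have hm0 : (0:ℝ) < m := by positivity
    have hmr1 : (1:ℝ) ≤ m := by exact_mod_cast hm1
    have hmain : ∑ r ∈ Icc 1 (n₂-1), (if k < l*r then ((l:ℝ)^2)⁻¹ * ((r:ℝ)^2)⁻¹ else 0)
        ≤ ((l:ℝ)^2)⁻¹ * (2/m) := by
      rw [e1, e2]
      exact mul_le_mul_of_nonneg_left hsum (by positivity)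
    by_cases hlk : l ≤ k
    · rw [if_pos hlk]
      refine hmain.trans ?_
      have hk0 : (0:ℝ) < k := by exact_mod_cast hk
      rw [inv_mul_eq_div, div_div]
      apply div_le_div_of_nonneg_left (by norm_num) (by positivity)
      nlinarith [mul_le_mul_of_nonneg_left hklm hl0.le]
    · rw [if_neg hlk]
      refine hmain.trans ?_
      rw [inv_mul_eq_div, div_div]
      apply div_le_div_of_nonneg_left (by norm_num) (by positivity)
      nlinarith
  · rw [if_neg hcond]
    apply le_of_eq
    apply Finset.sum_eq_zero
    intro r hr
    rw [mem_Icc] at hr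
    rw [if_neg]
    have : l * r ≤ l * (n₂-1) := Nat.mul_le_mul_left l hr.2
    omega


lemma key_bound (n₁ n₂ k : ℕ) (h2 : 2 ≤ n₂) (h21 : n₂ ≤ n₁) (hk : 1 ≤ k) :
    ∑ l ∈ Icc 1 (n₁-1), ∑ r ∈ Icc 1 (n₂-1),
        (if k < l*r then ((l:ℝ)^2)⁻¹ * ((r:ℝ)^2)⁻¹ else 0)
      ≤ 8 / (k:ℝ) * Real.log (n₂+1) := by
  have hk0 : (0:ℝ) < k := by exact_mod_cast hk
  have hn2 : (2:ℝ) ≤ n₂ := by exact_mod_cast h2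
  have hL : 1 ≤ Real.log (n₂+1) := by
    rw [Real.le_log_iff_exp_le (by positivity)]
    refine le_of_lt (lt_of_lt_of_le Real.exp_one_lt_d9 ?_)
    norm_num; linarith
  set L := Real.log (n₂+1) with hLdef
  have stepAB : ∑ l ∈ Icc 1 (n₁-1), ∑ r ∈ Icc 1 (n₂-1),
        (if k < l*r then ((l:ℝ)^2)⁻¹ * ((r:ℝ)^2)⁻¹ else 0)
      ≤ ∑ l ∈ Icc 1 (n₁-1), ((if k < l*(n₂-1) ∧ l ≤ k then 2/((l:ℝ)*(k:ℝ)) else 0)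
          + (if k+1 ≤ l then 2/(l:ℝ)^2 else 0)) := by
    apply Finset.sum_le_sum
    intro l hl
    rw [mem_Icc] at hl
    refine (inner_bound n₂ k l hl.1 hk).trans ?_
    by_cases hc : k < l*(n₂-1)
    · rw [if_pos hc]
      by_cases hlk : l ≤ k
      · rw [if_pos hlk, if_pos ⟨hc, hlk⟩, if_neg (by omega)]
        simp
      · rw [if_neg hlk, if_neg (by tauto), if_pos (by omega)]
        simp
    · rw [if_neg hc]
      have h1 : (0:ℝ) ≤ (if k < l*(n₂-1) ∧ l ≤ k then 2/((l:ℝ)*(k:ℝ)) else 0) := by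
        split <;> positivity
      have h2 : (0:ℝ) ≤ (if k+1 ≤ l then 2/(l:ℝ)^2 else 0) := by
        split <;> positivity
      linarith
  rw [Finset.sum_add_distrib] at stepAB
  have hC2 : ∑ l ∈ Icc 1 (n₁-1), (if k+1 ≤ l then 2/(l:ℝ)^2 else 0) ≤ 4/(k:ℝ) := by
    have e : ∑ l ∈ Icc 1 (n₁-1), (if k+1 ≤ l then 2/(l:ℝ)^2 else 0)
        = ∑ l ∈ Icc (k+1) (n₁-1), 2/(l:ℝ)^2 := by
      rw [← Finset.sum_subset (Icc_subset_Icc (by omega : 1 ≤ k+1) le_rfl)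
        (fun x hx hnx => by rw [mem_Icc] at hx hnx; rw [if_neg (by omega)])]
      exact Finset.sum_congr rfl fun l hl => by
        rw [mem_Icc] at hl; rw [if_pos hl.1]
    rw [e]
    have e2 : ∑ l ∈ Icc (k+1) (n₁-1), 2/(l:ℝ)^2
        = 2 * ∑ l ∈ Icc (k+1) (n₁-1), ((l:ℝ)^2)⁻¹ := by
      rw [mul_sum]; exact Finset.sum_congr rfl fun l hl => by rw [div_eq_mul_inv]
    rw [e2]
    calc 2 * ∑ l ∈ Icc (k+1) (n₁-1), ((l:ℝ)^2)⁻¹ ≤ 2 * (2/((k+1:ℕ):ℝ)) := by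
          have := sum_inv_sq_le (k+1) (n₁-1) (by omega)
          linarith
      _ ≤ 4/(k:ℝ) := by
          push_cast
          have e3 : 2 * (2/((k:ℝ)+1)) = 4/((k:ℝ)+1) := by ring
          rw [e3]
          apply div_le_div_of_nonneg_left (by norm_num) hk0
          linarith
  have hC1 : ∑ l ∈ Icc 1 (n₁-1), (if k < l*(n₂-1) ∧ l ≤ k then 2/((l:ℝ)*(k:ℝ)) else 0)
      ≤ 2/(k:ℝ) * (1 + L) := by
    set l₀ := k/(n₂-1) + 1 with hl₀
    have hl₀1 : 1 ≤ l₀ := Nat.le_add_left 1 _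
    set M := max (n₁-1) k with hM
    have s1 : ∑ l ∈ Icc 1 (n₁-1), (if k < l*(n₂-1) ∧ l ≤ k then 2/((l:ℝ)*(k:ℝ)) else 0)
        ≤ ∑ l ∈ Icc 1 M, (if k < l*(n₂-1) ∧ l ≤ k then 2/((l:ℝ)*(k:ℝ)) else 0) := by
      apply Finset.sum_le_sum_of_subset_of_nonneg (Icc_subset_Icc le_rfl (le_max_left _ _))
      intro x _ _
      split <;> positivity
    have s2 : ∑ l ∈ Icc 1 M, (if k < l*(n₂-1) ∧ l ≤ k then 2/((l:ℝ)*(k:ℝ)) else 0)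
        = ∑ l ∈ Icc l₀ k, 2/((l:ℝ)*(k:ℝ)) := by
      rw [← Finset.sum_subset (Icc_subset_Icc hl₀1 (le_max_right _ _))
        (fun x hx hnx => ?_)]
      · exact Finset.sum_congr rfl fun l hl => by
          rw [mem_Icc] at hl
          have h5 : k/(n₂-1) < l := by omega
          have h6 := (Nat.div_lt_iff_lt_mul (by omega : 0 < n₂-1)).mp h5
          rw [if_pos ⟨h6, hl.2⟩]
      · rw [mem_Icc] at hx hnx
        rw [if_neg]
        rintro ⟨hc1, hc2⟩
        have hx2 : x ≤ k/(n₂-1) := by omega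
        have := (Nat.le_div_iff_mul_le (by omega : 0 < n₂-1)).mp hx2
        omega
    have s3 : ∑ l ∈ Icc l₀ k, 2/((l:ℝ)*(k:ℝ)) = 2/(k:ℝ) * ∑ l ∈ Icc l₀ k, ((l:ℝ))⁻¹ := by
      rw [mul_sum]
      exact Finset.sum_congr rfl fun l hl => by
        rw [mem_Icc] at hl
        have hl0 : (0:ℝ) < l := by
          have : 1 ≤ l := le_trans hl₀1 hl.1
          exact_mod_cast this
        field_simp
    rcases le_or_gt l₀ k with hcase | hcase
    · have s4 := sum_inv_le l₀ k hl₀1 hcase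
      have hl₀0 : (0:ℝ) < l₀ := by exact_mod_cast hl₀1
      have hinv : (1:ℝ)/l₀ ≤ 1 := by
        rw [div_le_one hl₀0]; exact_mod_cast hl₀1
      have hlog : Real.log k - Real.log l₀ ≤ L := by
        have h1 : k < l₀ * (n₂-1) := by
          have h2' : (n₂-1) * (k/(n₂-1)) + k % (n₂-1) = k := Nat.div_add_mod k (n₂-1)
          have h3 : k % (n₂-1) < n₂-1 := Nat.mod_lt _ (by omega)
          calc k = (n₂-1) * (k/(n₂-1)) + k % (n₂-1) := h2'.symm
            _ < (n₂-1) * (k/(n₂-1)) + (n₂-1) := by omega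
            _ = l₀ * (n₂-1) := by rw [hl₀]; ring
        have h4 : (k:ℝ) ≤ (l₀:ℝ) * (((n₂-1:ℕ)):ℝ) := by exact_mod_cast h1.le
        have h5 : (((n₂-1:ℕ)):ℝ) ≤ (n₂:ℝ)+1 := by
          have : ((n₂-1:ℕ):ℝ) ≤ (n₂:ℝ) := by exact_mod_cast Nat.sub_le n₂ 1
          linarith
        have hkl : (k:ℝ) ≤ (l₀:ℝ) * ((n₂:ℝ)+1) := by nlinarith
        have h6 := Real.log_le_log hk0 hkl
        rw [Real.log_mul hl₀0.ne' (by positivity)] at h6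
        rw [hLdef]
        linarith
      calc ∑ l ∈ Icc 1 (n₁-1), (if k < l*(n₂-1) ∧ l ≤ k then 2/((l:ℝ)*(k:ℝ)) else 0)
          ≤ 2/(k:ℝ) * ∑ l ∈ Icc l₀ k, ((l:ℝ))⁻¹ := by rw [← s3, ← s2]; exact s1
        _ ≤ 2/(k:ℝ) * (1/l₀ + Real.log k - Real.log l₀) := by
            apply mul_le_mul_of_nonneg_left s4 (by positivity)
        _ ≤ 2/(k:ℝ) * (1 + L) := by
            apply mul_le_mul_of_nonneg_left _ (by positivity)
            linarith
    · calc ∑ l ∈ Icc 1 (n₁-1), (if k < l*(n₂-1) ∧ l ≤ k then 2/((l:ℝ)*(k:ℝ)) else 0)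
          ≤ ∑ l ∈ Icc 1 M, (if k < l*(n₂-1) ∧ l ≤ k then 2/((l:ℝ)*(k:ℝ)) else 0) := s1
        _ = ∑ l ∈ Icc l₀ k, 2/((l:ℝ)*(k:ℝ)) := s2
        _ = 0 := by rw [Icc_eq_empty (by omega), sum_empty]
        _ ≤ 2/(k:ℝ) * (1 + L) := by positivity
  calc ∑ l ∈ Icc 1 (n₁-1), ∑ r ∈ Icc 1 (n₂-1),
        (if k < l*r then ((l:ℝ)^2)⁻¹ * ((r:ℝ)^2)⁻¹ else 0)
      ≤ 2/(k:ℝ) * (1 + L) + 4/(k:ℝ) := by linarith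
    _ = (2*(1+L) + 4) * (k:ℝ)⁻¹ := by ring
    _ ≤ (8*L) * (k:ℝ)⁻¹ := by
        apply mul_le_mul_of_nonneg_right (by linarith) (by positivity)
    _ = 8/(k:ℝ) * L := by ring

lemma sin_lower (n l : ℕ) (hn : 1 ≤ n) (hl1 : 1 ≤ l) (hln : l ≤ n) :
    (l:ℝ)/n ≤ Real.sin (Real.pi * l / (2*n)) := by
  have hn0 : (0:ℝ) < n := by exact_mod_cast hn
  have hl0 : (0:ℝ) < l := by exact_mod_cast hl1
  have hln' : (l:ℝ) ≤ n := by exact_mod_cast hln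
  have hx0 : 0 ≤ Real.pi * l / (2*n) := by positivity
  have hx1 : Real.pi * l / (2*n) ≤ Real.pi / 2 := by
    rw [div_le_div_iff₀ (by positivity) (by norm_num)]
    nlinarith [Real.pi_pos]
  have := Real.mul_le_sin hx0 hx1
  have heq : 2/Real.pi * (Real.pi * l / (2*n)) = (l:ℝ)/n := by
    field_simp
  linarith [heq ▸ this]

lemma term_bound (n₁ n₂ i j l r : ℕ) (h1 : 2 ≤ n₁) (h2 : 2 ≤ n₂)
    (hl1 : 1 ≤ l) (hl2 : l ≤ n₁-1) (hr1 : 1 ≤ r) (hr2 : r ≤ n₂-1) :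
    Real.sin (Real.pi * i * l / n₁) ^ 2 * Real.sin (Real.pi * j * r / n₂) ^ 2 /
        (4 * n₁ * n₂ * Real.sin (Real.pi * l / (2 * n₁)) ^ 2 *
          Real.sin (Real.pi * r / (2 * n₂)) ^ 2)
      ≤ (n₁:ℝ)*n₂/4 * (((l:ℝ)^2)⁻¹ * ((r:ℝ)^2)⁻¹) := by
  have hn₁ : (0:ℝ) < n₁ := by exact_mod_cast Nat.lt_of_lt_of_le Nat.zero_lt_two h1
  have hn₂ : (0:ℝ) < n₂ := by exact_mod_cast Nat.lt_of_lt_of_le Nat.zero_lt_two h2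
  have hl0 : (0:ℝ) < l := by exact_mod_cast hl1
  have hr0 : (0:ℝ) < r := by exact_mod_cast hr1
  have hs := sin_lower n₁ l (by omega) hl1 (by omega)
  have ht := sin_lower n₂ r (by omega) hr1 (by omega)
  set s := Real.sin (Real.pi * l / (2 * n₁)) with hsdef
  set t := Real.sin (Real.pi * r / (2 * n₂)) with htdef
  have hs2 : ((l:ℝ)/n₁)^2 ≤ s^2 := pow_le_pow_left₀ (by positivity) hs 2
  have ht2 : ((r:ℝ)/n₂)^2 ≤ t^2 := pow_le_pow_left₀ (by positivity) ht 2
  have hd0 : (0:ℝ) < 4*(l:ℝ)^2*(r:ℝ)^2/((n₁:ℝ)*(n₂:ℝ)) := by positivity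
  have hdD : 4*(l:ℝ)^2*(r:ℝ)^2/((n₁:ℝ)*(n₂:ℝ)) ≤ 4*n₁*n₂*s^2*t^2 := by
    calc 4*(l:ℝ)^2*(r:ℝ)^2/((n₁:ℝ)*(n₂:ℝ))
        = 4*(n₁:ℝ)*(n₂:ℝ)*(((l:ℝ)/n₁)^2*((r:ℝ)/n₂)^2) := by
          field_simp
      _ ≤ 4*(n₁:ℝ)*(n₂:ℝ)*(s^2*t^2) := by
          apply mul_le_mul_of_nonneg_left _ (by positivity)
          exact mul_le_mul hs2 ht2 (by positivity) (by positivity)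
      _ = 4*(n₁:ℝ)*n₂*s^2*t^2 := by ring
  have hnum : Real.sin (Real.pi * i * l / n₁) ^ 2 * Real.sin (Real.pi * j * r / n₂) ^ 2 ≤ 1 :=
    mul_le_one₀ (Real.sin_sq_le_one _) (sq_nonneg _) (Real.sin_sq_le_one _)
  calc Real.sin (Real.pi * i * l / n₁) ^ 2 * Real.sin (Real.pi * j * r / n₂) ^ 2 /
        (4 * n₁ * n₂ * s ^ 2 * t ^ 2)
      ≤ 1 / (4*(l:ℝ)^2*(r:ℝ)^2/((n₁:ℝ)*(n₂:ℝ))) := div_le_div₀ (by norm_num) hnum hd0 hdD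
    _ = (n₁:ℝ)*n₂/4 * (((l:ℝ)^2)⁻¹ * ((r:ℝ)^2)⁻¹) := by
        field_simp

theorem sine_sum_bound :
    ∃ C : ℝ, 0 < C ∧
      ∀ n₁ n₂ k i j : ℕ, 2 ≤ n₂ → n₂ ≤ n₁ → 1 ≤ k →
        1 ≤ i → i ≤ n₁ - 1 → 1 ≤ j → j ≤ n₂ - 1 →
        (∑ l ∈ Finset.Icc 1 (n₁ - 1), ∑ r ∈ Finset.Icc 1 (n₂ - 1),
            if k < l * r then
              Real.sin (Real.pi * i * l / n₁) ^ 2 * Real.sin (Real.pi * j * r / n₂) ^ 2 /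
                (4 * n₁ * n₂ * Real.sin (Real.pi * l / (2 * n₁)) ^ 2 *
                  Real.sin (Real.pi * r / (2 * n₂)) ^ 2)
            else 0)
          ≤ C * ((n₁ * n₂ : ℝ) / k) * Real.log (n₂ + 1) := by
  refine ⟨2, by norm_num, ?_⟩
  intro n₁ n₂ k i j h2 h21 hk hi1 hi2 hj1 hj2
  have h1 : 2 ≤ n₁ := le_trans h2 h21
  have hk0 : (0:ℝ) < k := by exact_mod_cast hk
  have hn₁ : (0:ℝ) < n₁ := by exact_mod_cast Nat.lt_of_lt_of_le Nat.zero_lt_two h1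
  have hn₂ : (0:ℝ) < n₂ := by exact_mod_cast Nat.lt_of_lt_of_le Nat.zero_lt_two h2
  have step1 : (∑ l ∈ Finset.Icc 1 (n₁ - 1), ∑ r ∈ Finset.Icc 1 (n₂ - 1),
            if k < l * r then
              Real.sin (Real.pi * i * l / n₁) ^ 2 * Real.sin (Real.pi * j * r / n₂) ^ 2 /
                (4 * n₁ * n₂ * Real.sin (Real.pi * l / (2 * n₁)) ^ 2 *
                  Real.sin (Real.pi * r / (2 * n₂)) ^ 2)
            else 0)
      ≤ ∑ l ∈ Finset.Icc 1 (n₁ - 1), ∑ r ∈ Finset.Icc 1 (n₂ - 1),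
          (if k < l * r then (n₁:ℝ)*n₂/4 * (((l:ℝ)^2)⁻¹ * ((r:ℝ)^2)⁻¹) else 0) := by
    apply Finset.sum_le_sum
    intro l hl
    apply Finset.sum_le_sum
    intro r hr
    rw [mem_Icc] at hl hr
    by_cases hc : k < l * r
    · rw [if_pos hc, if_pos hc]
      exact term_bound n₁ n₂ i j l r h1 h2 hl.1 hl.2 hr.1 hr.2
    · rw [if_neg hc, if_neg hc]
  have step2 : ∑ l ∈ Finset.Icc 1 (n₁ - 1), ∑ r ∈ Finset.Icc 1 (n₂ - 1),
          (if k < l * r then (n₁:ℝ)*n₂/4 * (((l:ℝ)^2)⁻¹ * ((r:ℝ)^2)⁻¹) else 0)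
      = (n₁:ℝ)*n₂/4 * ∑ l ∈ Finset.Icc 1 (n₁ - 1), ∑ r ∈ Finset.Icc 1 (n₂ - 1),
          (if k < l * r then ((l:ℝ)^2)⁻¹ * ((r:ℝ)^2)⁻¹ else 0) := by
    rw [Finset.mul_sum]
    refine Finset.sum_congr rfl fun l _ => ?_
    rw [Finset.mul_sum]
    refine Finset.sum_congr rfl fun r _ => ?_
    rw [mul_ite, mul_zero]
  have step3 := key_bound n₁ n₂ k h2 h21 hk
  calc (∑ l ∈ Finset.Icc 1 (n₁ - 1), ∑ r ∈ Finset.Icc 1 (n₂ - 1),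
            if k < l * r then
              Real.sin (Real.pi * i * l / n₁) ^ 2 * Real.sin (Real.pi * j * r / n₂) ^ 2 /
                (4 * n₁ * n₂ * Real.sin (Real.pi * l / (2 * n₁)) ^ 2 *
                  Real.sin (Real.pi * r / (2 * n₂)) ^ 2)
            else 0)
      ≤ (n₁:ℝ)*n₂/4 * ∑ l ∈ Finset.Icc 1 (n₁ - 1), ∑ r ∈ Finset.Icc 1 (n₂ - 1),
          (if k < l * r then ((l:ℝ)^2)⁻¹ * ((r:ℝ)^2)⁻¹ else 0) := by
        rw [← step2]; exact step1
    _ ≤ (n₁:ℝ)*n₂/4 * (8/(k:ℝ) * Real.log (n₂+1)) :=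
        mul_le_mul_of_nonneg_left step3 (by positivity)
    _ = 2 * ((n₁ * n₂ : ℝ) / k) * Real.log (n₂ + 1) := by ring
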